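/- Every finite digraph has a unique decomposition into intervals: a unique partition of its vertex set into sets V_i, each of which is a region (of the form Inf^∞{x}) that is maximal among regions. -/

import Mathlib

/-- Inflation of a vertex set in a digraph with arc relation `E`. -/
def dInfl {V : Type*} (E : V → V → Prop) (U : Set V) : Set V :=
  U ∪ {v | (∃ u, E u v) ∧ ∀ u, E u v → u ∈ U}

/-- Hyperinflation: union of all iterates of the inflation. -/
def dInflStar {V : Type*} (E : V → V → Prop) (U : Set V) : Set V :=
  ⋃ n : ℕ, (dInfl E)^[n] U

/-- An interval: a region (hyperinflation of a singleton) that is maximal among regions. -/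
def IsInterval {V : Type*} (E : V → V → Prop) (A : Set V) : Prop :=
  (∃ x : V, A = dInflStar E {x}) ∧
    ∀ y : V, A ⊆ dInflStar E {y} → A = dInflStar E {y}

section Aux

variable {V : Type*} (E : V → V → Prop)

lemma subset_dInfl (U : Set V) : U ⊆ dInfl E U := Set.subset_union_left

lemma dInfl_mono {U W : Set V} (h : U ⊆ W) : dInfl E U ⊆ dInfl E W := by
  rintro v (hv | ⟨he, hall⟩)
  · exact Or.inl (h hv)
  · exact Or.inr ⟨he, fun u hu => h (hall u hu)⟩

lemma iter_chain_mono (U : Set V) : Monotone fun n => (dInfl E)^[n] U := by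
  apply monotone_nat_of_le_succ
  intro n
  rw [Function.iterate_succ_apply']
  exact subset_dInfl E _

lemma subset_dInflStar (U : Set V) : U ⊆ dInflStar E U :=
  Set.subset_iUnion (fun n => (dInfl E)^[n] U) 0

lemma mem_self_dInflStar (x : V) : x ∈ dInflStar E {x} :=
  subset_dInflStar E {x} rfl

lemma dInflStar_closed [Fintype V] (U : Set V) :
    dInfl E (dInflStar E U) ⊆ dInflStar E U := by
  classical
  rintro v (hv | ⟨⟨u, hu⟩, hall⟩)
  · exact hv
  · have hch : ∀ w, E w v → ∃ n, w ∈ (dInfl E)^[n] U := by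
      intro w hw
      exact Set.mem_iUnion.1 (hall w hw)
    choose g hg using hch
    set N : ℕ := Finset.univ.sup (fun w : V => if h : E w v then g w h else 0) with hN
    have hle : ∀ w (hw : E w v), g w hw ≤ N := by
      intro w hw
      have := Finset.le_sup (f := fun w : V => if h : E w v then g w h else 0)
        (Finset.mem_univ w)
      simpa [dif_pos hw] using this
    have hmem : v ∈ (dInfl E)^[N + 1] U := by
      rw [Function.iterate_succ_apply']
      refine Or.inr ⟨⟨u, hu⟩, fun w hw => ?_⟩
      exact iter_chain_mono E U (hle w hw) (hg w hw)
    exact Set.mem_iUnion.2 ⟨N + 1, hmem⟩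

lemma dInflStar_least {U S : Set V} (hU : U ⊆ S) (hS : dInfl E S ⊆ S) :
    dInflStar E U ⊆ S := by
  apply Set.iUnion_subset
  intro n
  induction n with
  | zero => exact hU
  | succ n ih =>
    rw [Function.iterate_succ_apply']
    exact fun x hx => hS (dInfl_mono E ih hx)

lemma region_trans [Fintype V] {x y : V} (hy : y ∈ dInflStar E {x}) :
    dInflStar E {y} ⊆ dInflStar E {x} :=
  dInflStar_least E (by simpa using hy) (dInflStar_closed E _)

lemma mem_dInflStar_elim {U : Set V} {z : V} (hz : z ∈ dInflStar E U) :
    z ∈ U ∨ ((∃ u, E u z) ∧ ∀ u, E u z → u ∈ dInflStar E U) := by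
  obtain ⟨n, hn⟩ := Set.mem_iUnion.1 hz
  induction n with
  | zero => exact Or.inl hn
  | succ n ih =>
    rw [Function.iterate_succ_apply'] at hn
    rcases hn with h | ⟨he, hall⟩
    · exact ih h
    · exact Or.inr ⟨he, fun u hu => Set.mem_iUnion.2 ⟨n, hall u hu⟩⟩

lemma region_comparable_aux [Fintype V] (a b : V) :
    ∀ n : ℕ, ∀ z : V, z ∈ (dInfl E)^[n] {a} → z ∈ dInflStar E {b} →
      dInflStar E {a} ⊆ dInflStar E {b} ∨ dInflStar E {b} ⊆ dInflStar E {a} := by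
  intro n
  induction n using Nat.strong_induction_on with
  | _ n ih =>
    intro z hn hb
    match n with
    | 0 =>
      have hz : z = a := hn
      subst hz
      exact Or.inl (region_trans E hb)
    | Nat.succ n =>
      have hza : z ∈ dInflStar E {a} := Set.mem_iUnion.2 ⟨n + 1, hn⟩
      rw [Function.iterate_succ_apply'] at hn
      rcases hn with h | ⟨⟨u, hu⟩, hall⟩
      · exact ih n (Nat.lt_succ_self n) z h hb
      · rcases mem_dInflStar_elim E hb with hzb | ⟨_, hballs⟩
        · have hz : z = b := hzb
          subst hz
          exact Or.inr (region_trans E hza)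
        · exact ih n (Nat.lt_succ_self n) u (hall u hu) (hballs u hu)

lemma region_comparable [Fintype V] {a b z : V}
    (ha : z ∈ dInflStar E {a}) (hb : z ∈ dInflStar E {b}) :
    dInflStar E {a} ⊆ dInflStar E {b} ∨ dInflStar E {b} ⊆ dInflStar E {a} := by
  obtain ⟨n, hn⟩ := Set.mem_iUnion.1 ha
  exact region_comparable_aux E a b n z hn hb

lemma interval_eq_of_mem [Fintype V] {A B : Set V} {z : V}
    (hA : IsInterval E A) (hB : IsInterval E B) (hzA : z ∈ A) (hzB : z ∈ B) :
    A = B := by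
  obtain ⟨a, rfl⟩ := hA.1
  obtain ⟨b, rfl⟩ := hB.1
  rcases region_comparable E hzA hzB with h | h
  · exact hA.2 b h
  · exact (hB.2 a h).symm

lemma exists_interval_mem [Fintype V] (x : V) :
    ∃ A : Set V, IsInterval E A ∧ x ∈ A := by
  classical
  set S : Set (Set V) := {B | (∃ y, B = dInflStar E {y}) ∧ dInflStar E {x} ⊆ B} with hS
  have hfin : S.Finite := Set.toFinite S
  have hne : S.Nonempty := ⟨dInflStar E {x}, ⟨x, rfl⟩, subset_rfl⟩
  obtain ⟨B, hBS, hmax⟩ : ∃ B ∈ S, ∀ B' ∈ S, id B ≤ id B' → id B = id B' := by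
    obtain ⟨B, hBS, hmax⟩ := Set.Finite.exists_maximalFor id S hfin hne
    exact ⟨B, hBS, fun B' hB' h => le_antisymm h (hmax hB' h)⟩
  obtain ⟨⟨y, rfl⟩, hxB⟩ := hBS
  refine ⟨dInflStar E {y}, ⟨⟨y, rfl⟩, fun z hz => ?_⟩, hxB (mem_self_dInflStar E x)⟩
  exact hmax (dInflStar E {z}) ⟨⟨z, rfl⟩, hxB.trans hz⟩ hz

end Aux

theorem stmt_11 {V : Type*} [Fintype V] (E : V → V → Prop) :
    ∃! P : Set (Set V),
      (∀ A ∈ P, IsInterval E A) ∧ ⋃₀ P = Set.univ ∧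
        P.PairwiseDisjoint id := by
  refine ⟨{A | IsInterval E A}, ⟨fun A hA => hA, ?_, ?_⟩, ?_⟩
  · apply Set.eq_univ_of_forall
    intro x
    obtain ⟨A, hA, hxA⟩ := exists_interval_mem E x
    exact ⟨A, hA, hxA⟩
  · intro A hA B hB hne
    refine Set.disjoint_left.2 fun z hzA hzB => hne ?_
    exact interval_eq_of_mem E hA hB hzA hzB
  · intro Q ⟨hQint, hQcov, _⟩
    ext A
    constructor
    · exact fun hA => hQint A hA
    · intro hA
      obtain ⟨a, ha⟩ := hA.1
      have haA : a ∈ A := ha ▸ mem_self_dInflStar E a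
      have : a ∈ ⋃₀ Q := hQcov ▸ Set.mem_univ a
      obtain ⟨B, hBQ, haB⟩ := this
      have : A = B := interval_eq_of_mem E hA (hQint B hBQ) haA haB
      exact this ▸ hBQ
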